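/- Let g : X^d → ℝ be a measurable self-bounding function and X_1, …, X_d independent random variables with values in X. Then Z = g(X_1,…,X_d) satisfies Var(Z) ≤ E[Z]. -/

import Mathlib

open MeasureTheory

namespace SelfBoundAux

variable {α : Type*} [MeasurableSpace α]

lemma integrable_of_bdd {β : Type*} [MeasurableSpace β] {μ : Measure β} [IsProbabilityMeasure μ]
    {f : β → ℝ} (hf : AEStronglyMeasurable f μ) {C : ℝ} (hC : ∀ x, |f x| ≤ C) :
    Integrable f μ :=
  (integrable_const C).mono' hf (Filter.Eventually.of_forall fun x => by
    simpa [Real.norm_eq_abs] using hC x)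

lemma abs_sq_le {f : ℝ} {C : ℝ} (h : |f| ≤ C) : |f ^ 2| ≤ C ^ 2 := by
  rw [abs_pow]
  exact pow_le_pow_left₀ (abs_nonneg f) h 2

lemma abs_integral_le {β : Type*} [MeasurableSpace β] {μ : Measure β} [IsProbabilityMeasure μ]
    {f : β → ℝ} {C : ℝ} (hC : ∀ x, |f x| ≤ C) : |∫ x, f x ∂μ| ≤ C := by
  have := norm_integral_le_of_norm_le_const (μ := μ) (f := f) (C := C)
    (Filter.Eventually.of_forall fun x => by simpa [Real.norm_eq_abs] using hC x)
  simpa [Real.norm_eq_abs, measure_univ] using this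

/-- one-dimensional variance identity -/
lemma var_identity {β : Type*} [MeasurableSpace β] {μ : Measure β} [IsProbabilityMeasure μ]
    {f : β → ℝ} (hf : AEStronglyMeasurable f μ) {C : ℝ} (hC : ∀ x, |f x| ≤ C) (c : ℝ) :
    ∫ x, (f x - c) ^ 2 ∂μ
      = (∫ x, f x ^ 2 ∂μ - (∫ x, f x ∂μ) ^ 2) + (∫ x, f x ∂μ - c) ^ 2 := by
  have hint : Integrable f μ := integrable_of_bdd hf hC
  have hf2 : AEStronglyMeasurable (fun x => f x ^ 2) μ := by
    simpa [sq, Pi.mul_def] using hf.mul hf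
  have hint2 : Integrable (fun x => f x ^ 2) μ :=
    integrable_of_bdd hf2 (C := C ^ 2) fun x => abs_sq_le (hC x)
  have h1 : Integrable (fun x => f x ^ 2 - (2 * c) * f x) μ :=
    hint2.sub (hint.const_mul _)
  have key : ∫ x, (f x - c) ^ 2 ∂μ
      = ∫ x, (f x ^ 2 - (2 * c) * f x + c ^ 2) ∂μ := by
    congr 1; funext x; ring
  rw [key, integral_add h1 (integrable_const _), integral_sub hint2 (hint.const_mul _),
    integral_const_mul, integral_const]
  simp [measure_univ]
  ring

lemma sq_integral_le {β : Type*} [MeasurableSpace β] {μ : Measure β} [IsProbabilityMeasure μ]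
    {f : β → ℝ} (hf : AEStronglyMeasurable f μ) {C : ℝ} (hC : ∀ x, |f x| ≤ C) :
    (∫ x, f x ∂μ) ^ 2 ≤ ∫ x, f x ^ 2 ∂μ := by
  have := var_identity hf hC (∫ x, f x ∂μ)
  have h0 : (0:ℝ) ≤ ∫ x, (f x - ∫ x, f x ∂μ) ^ 2 ∂μ :=
    integral_nonneg fun x => sq_nonneg _
  simp only [sub_self, ne_eq, OfNat.ofNat_ne_zero, not_false_eq_true, zero_pow, add_zero] at this
  linarith [this ▸ h0]

lemma var_le_sub {β : Type*} [MeasurableSpace β] {μ : Measure β} [IsProbabilityMeasure μ]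
    {f : β → ℝ} (hf : AEStronglyMeasurable f μ) {C : ℝ} (hC : ∀ x, |f x| ≤ C) (c : ℝ) :
    ∫ x, f x ^ 2 ∂μ - (∫ x, f x ∂μ) ^ 2 ≤ ∫ x, (f x - c) ^ 2 ∂μ := by
  rw [var_identity hf hC c]
  nlinarith [sq_nonneg (∫ x, f x ∂μ - c)]



variable {α : Type*} [MeasurableSpace α]

lemma measurable_consp {d : ℕ} :
    Measurable (fun p : (Fin d → α) × α => (Fin.cons p.2 p.1 : Fin (d+1) → α)) := by
  apply measurable_pi_lambda
  intro j
  refine Fin.cases ?_ ?_ j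
  · simpa using measurable_snd
  · intro k
    simpa [Function.comp_def] using (measurable_pi_apply k).comp measurable_fst

lemma measurable_updatep {d : ℕ} (i : Fin d) :
    Measurable (fun p : (Fin d → α) × α => Function.update p.1 i p.2) := by
  apply measurable_pi_lambda
  intro j
  by_cases h : j = i
  · subst h; simpa [Function.update_self] using measurable_snd
  · simpa [Function.update_of_ne h, Function.comp_def] using (measurable_pi_apply j).comp measurable_fst

lemma measurable_param_integral {γ β : Type*} [MeasurableSpace γ] [MeasurableSpace β]
    {μ : Measure β} [SFinite μ] {F : γ × β → ℝ} (hF : Measurable F) :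
    Measurable fun y => ∫ t, F (y, t) ∂μ :=
  hF.stronglyMeasurable.integral_prod_right'.measurable

/-- splitting the first coordinate of a product integral -/
lemma integral_cons_zero {d : ℕ} (ν : Fin (d+1) → Measure α) [∀ i, IsProbabilityMeasure (ν i)]
    (F : (Fin (d+1) → α) → ℝ) (hF : Measurable F) {C : ℝ} (hC : ∀ x, |F x| ≤ C) :
    ∫ x, F x ∂Measure.pi ν
      = ∫ y, ∫ t, F (Fin.cons t y) ∂(ν 0) ∂Measure.pi (fun j => ν j.succ) := by
  have hsa : (fun j : Fin d => ν ((0 : Fin (d+1)).succAbove j)) = fun j => ν j.succ := by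
    funext j; rw [Fin.succAbove_zero]
  have MP := measurePreserving_piFinSuccAbove ν 0
  rw [hsa] at MP
  set e := MeasurableEquiv.piFinSuccAbove (fun _ : Fin (d+1) => α) 0 with he
  have hes : ∀ p : α × (Fin d → α), e.symm p = Fin.cons p.1 p.2 := by
    intro p
    have h1 : e.symm p = Fin.insertNthEquiv (fun _ : Fin (d+1) => α) 0 p :=
      congrFun (MeasurableEquiv.piFinSuccAbove_symm_apply (fun _ : Fin (d+1) => α) 0) p
    rw [h1]
    exact Fin.insertNth_zero' p.1 p.2
  have key : ∀ x, F x = (fun p : α × (Fin d → α) => F (Fin.cons p.1 p.2)) (e x) := by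
    intro x
    show F x = F (Fin.cons (e x).1 (e x).2)
    rw [← hes (e x), MeasurableEquiv.symm_apply_apply]
  have hmeas2 : Measurable (fun p : α × (Fin d → α) => F (Fin.cons p.1 p.2)) := by
    have : Measurable (fun p : α × (Fin d → α) => (Fin.cons p.1 p.2 : Fin (d+1) → α)) := by
      have := measurable_consp (α := α) (d := d)
      exact this.comp measurable_swap
    exact hF.comp this
  calc ∫ x, F x ∂Measure.pi ν
      = ∫ x, (fun p : α × (Fin d → α) => F (Fin.cons p.1 p.2)) (e x) ∂Measure.pi ν := by
        congr 1; funext x; rw [← key]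
    _ = ∫ p, F (Fin.cons p.1 p.2) ∂((ν 0).prod (Measure.pi fun j => ν j.succ)) := by
        have := MP.integral_comp e.measurableEmbedding
          (fun p : α × (Fin d → α) => F (Fin.cons p.1 p.2))
        simpa using this
    _ = ∫ t, ∫ y, F (Fin.cons t y) ∂Measure.pi (fun j => ν j.succ) ∂(ν 0) := by
        apply integral_prod
        exact integrable_of_bdd hmeas2.aestronglyMeasurable (fun p => hC _)
    _ = ∫ y, ∫ t, F (Fin.cons t y) ∂(ν 0) ∂Measure.pi (fun j => ν j.succ) := by
        apply integral_integral_swap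
        exact integrable_of_bdd hmeas2.aestronglyMeasurable (fun p => hC _)

lemma update_eq_insertNth {d : ℕ} (i : Fin (d+1)) (x : Fin (d+1) → α) (t : α) :
    Function.update x i t = i.insertNth t (fun j => x (i.succAbove j)) := by
  funext j
  refine Fin.succAboveCases i ?_ ?_ j
  · simp
  · intro k
    rw [Fin.insertNth_apply_succAbove, Function.update_of_ne (Fin.succAbove_ne i k)]

/-- integrating out a refreshed coordinate gives the plain integral -/
lemma integral_update {d : ℕ} (ν : Fin d → Measure α) [∀ i, IsProbabilityMeasure (ν i)]
    (g : (Fin d → α) → ℝ) (hg : Measurable g) {C : ℝ} (hC : ∀ x, |g x| ≤ C) (i : Fin d) :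
    ∫ x, (∫ t, g (Function.update x i t) ∂ν i) ∂Measure.pi ν = ∫ x, g x ∂Measure.pi ν := by
  cases d with
  | zero => exact i.elim0
  | succ n =>
    have MP := measurePreserving_piFinSuccAbove ν i
    set e := MeasurableEquiv.piFinSuccAbove (fun _ : Fin (n+1) => α) i with he
    set π' := Measure.pi (fun j => ν (i.succAbove j)) with hπ'
    have hes : ∀ p : α × (Fin n → α), e.symm p = i.insertNth p.1 p.2 := by
      intro p
      have h1 : e.symm p = Fin.insertNthEquiv (fun _ : Fin (n+1) => α) i p :=
        congrFun (MeasurableEquiv.piFinSuccAbove_symm_apply (fun _ : Fin (n+1) => α) i) p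
      rw [h1]; rfl
    have hG : Measurable (fun p : α × (Fin n → α) => g (i.insertNth p.1 p.2)) := by
      have : Measurable (e.symm : α × (Fin n → α) → (Fin (n+1) → α)) := e.symm.measurable
      have h2 : (fun p : α × (Fin n → α) => g (i.insertNth p.1 p.2)) = g ∘ e.symm := by
        funext p; rw [Function.comp_apply, hes]
      rw [h2]; exact hg.comp this
    -- inner integrand rewrite
    have key : ∀ x, (∫ t, g (Function.update x i t) ∂ν i)
        = (fun p : α × (Fin n → α) => ∫ t, g (i.insertNth t p.2) ∂ν i) (e x) := by
      intro x
      have hx2 : (e x).2 = fun j => x (i.succAbove j) := rfl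
      simp only [hx2]
      congr 1; funext t; rw [update_eq_insertNth]
    have hGm : Measurable (fun p : (Fin n → α) × α => g (i.insertNth p.2 p.1)) :=
      hG.comp measurable_swap
    calc ∫ x, (∫ t, g (Function.update x i t) ∂ν i) ∂Measure.pi ν
        = ∫ x, (fun p : α × (Fin n → α) => ∫ t, g (i.insertNth t p.2) ∂ν i) (e x)
            ∂Measure.pi ν := by congr 1; funext x; rw [← key]
      _ = ∫ p, (∫ t, g (i.insertNth t p.2) ∂ν i) ∂((ν i).prod π') := by
          have := MP.integral_comp e.measurableEmbedding
            (fun p : α × (Fin n → α) => ∫ t, g (i.insertNth t p.2) ∂ν i)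
          simpa using this
      _ = ∫ s, ∫ z, (∫ t, g (i.insertNth t z) ∂ν i) ∂π' ∂(ν i) := by
          apply integral_prod
          apply integrable_of_bdd (C := C)
          · exact (measurable_param_integral (μ := ν i) (F := fun p => g (i.insertNth p.2 p.1))
              hGm).comp measurable_snd |>.aestronglyMeasurable
          · intro p; exact abs_integral_le (fun t => hC _)
      _ = ∫ z, (∫ t, g (i.insertNth t z) ∂ν i) ∂π' := by
          rw [integral_const]; simp [measure_univ]
      _ = ∫ z, (∫ t, g (i.insertNth t z) ∂ν i) ∂π' := rfl
      _ = ∫ t, ∫ z, g (i.insertNth t z) ∂π' ∂(ν i) := by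
          apply integral_integral_swap (f := fun z t => g (i.insertNth t z))
          exact integrable_of_bdd hGm.aestronglyMeasurable (fun p => hC _)
      _ = ∫ p, g (i.insertNth p.1 p.2) ∂((ν i).prod π') := by
          symm; apply integral_prod
          exact integrable_of_bdd hG.aestronglyMeasurable (fun p => hC _)
      _ = ∫ x, g x ∂Measure.pi ν := by
          have := MP.integral_comp e.measurableEmbedding
            (fun p : α × (Fin n → α) => g (i.insertNth p.1 p.2))
          rw [← this]
          congr 1; funext x
          show g (Fin.insertNth i (e x).1 (e x).2) = g x
          rw [← hes (e x), MeasurableEquiv.symm_apply_apply]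






/-- Efron–Stein inequality for product measures, second-moment form. -/
lemma efron_stein : ∀ (d : ℕ) (ν : Fin d → Measure α) [∀ i, IsProbabilityMeasure (ν i)]
    (g : (Fin d → α) → ℝ) (hg : Measurable g) (C : ℝ) (hb : ∀ x, |g x| ≤ C),
    ∫ x, g x ^ 2 ∂Measure.pi ν - (∫ x, g x ∂Measure.pi ν) ^ 2 ≤
      ∑ i, ∫ x, ((∫ t, g (Function.update x i t) ^ 2 ∂ν i)
        - (∫ t, g (Function.update x i t) ∂ν i) ^ 2) ∂Measure.pi ν := by
  intro d
  induction d with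
  | zero =>
    intro ν _ g hg C hb
    have hgc : g = fun _ => g (fun i => i.elim0) :=
      funext fun x => congrArg g (funext fun i => i.elim0)
    rw [hgc]
    simp
  | succ n IH =>
    intro ν _ g hg C hb
    haveI : ∀ j : Fin n, IsProbabilityMeasure ((fun j : Fin n => ν j.succ) j) :=
      fun j => inferInstance
    set ρ := ν 0 with hρ
    set ν' : Fin n → Measure α := fun j => ν j.succ with hν'
    set π' := Measure.pi ν' with hπ'
    -- measurability of g^2
    have hgsq : Measurable fun x => g x ^ 2 := by
      simpa [sq, Pi.mul_def] using hg.mul hg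
    have hbsq : ∀ x, |g x ^ 2| ≤ C ^ 2 := fun x => abs_sq_le (hb x)
    -- the conditional mean over the first coordinate
    set h : (Fin n → α) → ℝ := fun y => ∫ t, g (Fin.cons t y) ∂ρ with hh_def
    have hconsm : Measurable (fun p : (Fin n → α) × α => g (Fin.cons p.2 p.1)) :=
      hg.comp measurable_consp
    have hh : Measurable h := measurable_param_integral hconsm
    have hhb : ∀ y, |h y| ≤ C := fun y => abs_integral_le (fun t => hb _)
    -- transfer facts
    have F1 : ∫ x, g x ∂Measure.pi ν = ∫ y, h y ∂π' :=
      integral_cons_zero ν g hg hb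
    have F2 : ∫ x, g x ^ 2 ∂Measure.pi ν
        = ∫ y, (∫ t, g (Fin.cons t y) ^ 2 ∂ρ) ∂π' :=
      integral_cons_zero ν (fun x => g x ^ 2) hgsq hbsq
    -- integrability over π'
    have hG2m : Measurable (fun y => ∫ t, g (Fin.cons t y) ^ 2 ∂ρ) :=
      measurable_param_integral (F := fun p : (Fin n → α) × α => g (Fin.cons p.2 p.1) ^ 2)
        (by simpa [sq, Pi.mul_def] using hconsm.mul hconsm)
    have hint1 : Integrable (fun y => ∫ t, g (Fin.cons t y) ^ 2 ∂ρ) π' :=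
      integrable_of_bdd hG2m.aestronglyMeasurable
        (C := C ^ 2) (fun y => abs_integral_le (fun t => hbsq _))
    have hinth2 : Integrable (fun y => h y ^ 2) π' :=
      integrable_of_bdd (by simpa [sq, Pi.mul_def] using (hh.mul hh).aestronglyMeasurable)
        (C := C ^ 2) (fun y => abs_sq_le (hhb y))
    -- decomposition
    have D : ∫ x, g x ^ 2 ∂Measure.pi ν - (∫ x, g x ∂Measure.pi ν) ^ 2
        = (∫ y, ((∫ t, g (Fin.cons t y) ^ 2 ∂ρ) - h y ^ 2) ∂π')
          + ((∫ y, h y ^ 2 ∂π') - (∫ y, h y ∂π') ^ 2) := by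
      rw [F1, F2, integral_sub hint1 hinth2]
      ring
    -- the zero-index term of the RHS
    have upd0 : ∀ (x : Fin (n+1) → α) (t : α),
        Function.update x 0 t = Fin.cons t (fun k => x k.succ) := by
      intro x t
      funext j
      refine Fin.cases ?_ ?_ j
      · simp
      · intro k
        rw [Function.update_of_ne (Fin.succ_ne_zero k)]
        simp
    have T0 : ∫ x, ((∫ t, g (Function.update x 0 t) ^ 2 ∂ν 0)
          - (∫ t, g (Function.update x 0 t) ∂ν 0) ^ 2) ∂Measure.pi ν
        = ∫ y, ((∫ t, g (Fin.cons t y) ^ 2 ∂ρ) - h y ^ 2) ∂π' := by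
      have hFm : Measurable (fun x : Fin (n+1) → α =>
          (∫ t, g (Function.update x 0 t) ^ 2 ∂ν 0)
            - (∫ t, g (Function.update x 0 t) ∂ν 0) ^ 2) := by
        have m1 : Measurable (fun p : (Fin (n+1) → α) × α => g (Function.update p.1 0 p.2)) :=
          hg.comp (measurable_updatep 0)
        have m2 := measurable_param_integral (μ := ν 0) (F := fun p : (Fin (n+1) → α) × α =>
          g (Function.update p.1 0 p.2) ^ 2) (by simpa [sq, Pi.mul_def] using m1.mul m1)
        have m3 := measurable_param_integral (μ := ν 0) (F := fun p : (Fin (n+1) → α) × α =>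
          g (Function.update p.1 0 p.2)) m1
        exact m2.sub ((by simpa [sq, Pi.mul_def] using m3.mul m3 : Measurable _))
      have hFb : ∀ x : Fin (n+1) → α,
          |(∫ t, g (Function.update x 0 t) ^ 2 ∂ν 0)
            - (∫ t, g (Function.update x 0 t) ∂ν 0) ^ 2| ≤ C ^ 2 + C ^ 2 := by
        intro x
        refine (abs_sub _ _).trans (add_le_add ?_ ?_)
        · exact abs_integral_le (fun t => abs_sq_le (hb _))
        · exact abs_sq_le (abs_integral_le (fun t => hb _))
      rw [integral_cons_zero ν _ hFm hFb]
      congr 1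
      funext y
      have hc : ∀ s t : α, Function.update (Fin.cons s y : Fin (n+1) → α) 0 t
          = Fin.cons t y := by
        intro s t
        rw [upd0]
        congr 1
      have : ∀ s : α, ((∫ t, g (Function.update (Fin.cons s y) 0 t) ^ 2 ∂ν 0)
          - (∫ t, g (Function.update (Fin.cons s y) 0 t) ∂ν 0) ^ 2)
          = ((∫ t, g (Fin.cons t y) ^ 2 ∂ρ) - h y ^ 2) := by
        intro s
        simp only [hc s]
        rfl
      rw [show (fun s => ((∫ t, g (Function.update (Fin.cons s y) 0 t) ^ 2 ∂ν 0)
          - (∫ t, g (Function.update (Fin.cons s y) 0 t) ∂ν 0) ^ 2))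
          = fun _ : α => ((∫ t, g (Fin.cons t y) ^ 2 ∂ρ) - h y ^ 2) from funext this]
      simp [measure_univ]
    have hαne : Nonempty α := by
      by_contra hne
      rw [not_nonempty_iff] at hne
      have h1 := measure_univ (μ := ν 0)
      rw [Set.univ_eq_empty_iff.mpr hne] at h1
      simp at h1
    have hC0 : 0 ≤ C :=
      (abs_nonneg _).trans (hb (fun _ => Classical.arbitrary _))
    -- measurability and boundedness of the generic RHS integrand
    have hFm : ∀ i : Fin (n+1), Measurable (fun x : Fin (n+1) → α =>
        (∫ t, g (Function.update x i t) ^ 2 ∂ν i)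
          - (∫ t, g (Function.update x i t) ∂ν i) ^ 2) := by
      intro i
      have m1 : Measurable (fun p : (Fin (n+1) → α) × α => g (Function.update p.1 i p.2)) :=
        hg.comp (measurable_updatep i)
      have m2 := measurable_param_integral (μ := ν i) (F := fun p : (Fin (n+1) → α) × α =>
        g (Function.update p.1 i p.2) ^ 2) (by simpa [sq, Pi.mul_def] using m1.mul m1)
      have m3 := measurable_param_integral (μ := ν i) (F := fun p : (Fin (n+1) → α) × α =>
        g (Function.update p.1 i p.2)) m1
      exact m2.sub ((by simpa [sq, Pi.mul_def] using m3.mul m3 : Measurable _))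
    have hFb : ∀ (i : Fin (n+1)) (x : Fin (n+1) → α),
        |(∫ t, g (Function.update x i t) ^ 2 ∂ν i)
          - (∫ t, g (Function.update x i t) ∂ν i) ^ 2| ≤ C ^ 2 + C ^ 2 := by
      intro i x
      refine (abs_sub _ _).trans (add_le_add ?_ ?_)
      · exact abs_integral_le (fun t => abs_sq_le (hb _))
      · exact abs_sq_le (abs_integral_le (fun t => hb _))
    -- the per-coordinate comparison
    have per_j : ∀ j : Fin n,
        ∫ y, ((∫ s, h (Function.update y j s) ^ 2 ∂ν' j)
            - (∫ s, h (Function.update y j s) ∂ν' j) ^ 2) ∂π'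
          ≤ ∫ x, ((∫ t, g (Function.update x j.succ t) ^ 2 ∂ν j.succ)
            - (∫ t, g (Function.update x j.succ t) ∂ν j.succ) ^ 2) ∂Measure.pi ν := by
      intro j
      set μj := ν' j with hμj
      -- transfer the RHS to an iterated integral over (t, y)
      have RHS_eq : ∫ x, ((∫ t, g (Function.update x j.succ t) ^ 2 ∂ν j.succ)
            - (∫ t, g (Function.update x j.succ t) ∂ν j.succ) ^ 2) ∂Measure.pi ν
          = ∫ y, ∫ t, ((∫ s, g (Fin.cons t (Function.update y j s)) ^ 2 ∂μj)
            - (∫ s, g (Fin.cons t (Function.update y j s)) ∂μj) ^ 2) ∂ρ ∂π' := by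
        rw [integral_cons_zero ν _ (hFm j.succ) (hFb j.succ)]
        congr 1
        funext y
        congr 1
        funext t
        have hcu : ∀ s : α, Function.update (Fin.cons t y : Fin (n+1) → α) j.succ s
            = Fin.cons t (Function.update y j s) := by
          intro s
          funext k
          refine Fin.cases ?_ ?_ k
          · rw [Function.update_of_ne (Ne.symm (Fin.succ_ne_zero j))]
            simp
          · intro m
            by_cases hm : m = j
            · subst hm; simp
            · rw [Function.update_of_ne (fun hh => hm (Fin.succ_injective _ hh))]
              simp [Function.update_of_ne hm]
        simp only [hcu]
        rfl
      rw [RHS_eq]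
      -- pointwise (in y) comparison
      have pointwise : ∀ y : Fin n → α,
          ((∫ s, h (Function.update y j s) ^ 2 ∂μj)
            - (∫ s, h (Function.update y j s) ∂μj) ^ 2)
          ≤ ∫ t, ((∫ s, g (Fin.cons t (Function.update y j s)) ^ 2 ∂μj)
            - (∫ s, g (Fin.cons t (Function.update y j s)) ∂μj) ^ 2) ∂ρ := by
        intro y
        set u : α × α → ℝ := fun q => g (Fin.cons q.1 (Function.update y j q.2)) with hu
        have hum : Measurable u := by
          have m1 : Measurable (fun q : α × α => Function.update y j q.2) :=
            (measurable_updatep j).comp (measurable_const.prodMk measurable_snd)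
          exact hg.comp ((measurable_consp.comp (m1.prodMk measurable_fst)))
        have hub : ∀ q, |u q| ≤ C := fun q => hb _
        set H : α → ℝ := fun s => ∫ t, u (t, s) ∂ρ with hH
        have hHm : Measurable H :=
          measurable_param_integral (F := fun p : α × α => u (p.2, p.1))
            (hum.comp measurable_swap : Measurable fun p : α × α => u (p.2, p.1))
        have hHb : ∀ s, |H s| ≤ C := fun s => abs_integral_le (fun t => hub _)
        set a : α → ℝ := fun t => ∫ s, u (t, s) ∂μj with ha
        have ham : Measurable a := measurable_param_integral (F := u) hum
        have hab : ∀ t, |a t| ≤ C := fun t => abs_integral_le (fun s => hub _)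
        have hHu : ∀ s, h (Function.update y j s) = H s := fun s => rfl
        set M : ℝ := ∫ s, H s ∂μj with hM
        have swapM : M = ∫ t, a t ∂ρ := by
          rw [hM]
          exact integral_integral_swap (f := fun s t => u (t, s))
            (integrable_of_bdd (hum.comp measurable_swap).aestronglyMeasurable
              (fun p => hub _))
        -- rewrite the LHS as a centered second moment
        have LHS_eq : (∫ s, h (Function.update y j s) ^ 2 ∂μj)
              - (∫ s, h (Function.update y j s) ∂μj) ^ 2
            = ∫ s, (H s - M) ^ 2 ∂μj := by
          simp only [hHu]
          rw [var_identity hHm.aestronglyMeasurable hHb M, ← hM]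
          simp
        rw [LHS_eq]
        -- pointwise Jensen step
        have step2 : ∀ s, (H s - M) ^ 2 ≤ ∫ t, (u (t, s) - a t) ^ 2 ∂ρ := by
          intro s
          have int1 : Integrable (fun t => u (t, s)) ρ :=
            integrable_of_bdd (by exact (hum.comp
              (measurable_id.prodMk measurable_const)).aestronglyMeasurable)
              (fun t => hub _)
          have int2 : Integrable a ρ := integrable_of_bdd ham.aestronglyMeasurable hab
          have hdiff : H s - M = ∫ t, (u (t, s) - a t) ∂ρ := by
            rw [swapM, hH]
            rw [← integral_sub int1 int2]
          rw [hdiff]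
          exact sq_integral_le
            ((hum.comp (measurable_id.prodMk measurable_const)).sub ham).aestronglyMeasurable
            (C := C + C) (fun t => (abs_sub _ _).trans (add_le_add (hub _) (hab _)))
        -- integrate and swap
        have sqm : Measurable (fun q : α × α => (u (q.2, q.1) - a q.2) ^ 2) := by
          have : Measurable (fun q : α × α => u (q.2, q.1) - a q.2) :=
            (hum.comp measurable_swap).sub (ham.comp measurable_snd)
          simpa [sq, Pi.mul_def] using this.mul this
        have sqb : ∀ q : α × α, |(u (q.2, q.1) - a q.2) ^ 2| ≤ (C + C) ^ 2 := fun q =>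
          abs_sq_le ((abs_sub _ _).trans (add_le_add (hub _) (hab _)))
        have hMb : |M| ≤ C := abs_integral_le hHb
        have hI1 : Integrable (fun s => (H s - M) ^ 2) μj := by
          refine integrable_of_bdd (C := (C + C) ^ 2) ?_ ?_
          · exact (by simpa [sq, Pi.mul_def] using ((hHm.sub measurable_const).mul
              (hHm.sub measurable_const)) : Measurable fun s => (H s - M) ^ 2
              ).aestronglyMeasurable
          · intro s
            exact abs_sq_le ((abs_sub _ _).trans (add_le_add (hHb s) hMb))
        have hI2 : Integrable (fun s => ∫ t, (u (t, s) - a t) ^ 2 ∂ρ) μj := by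
          refine integrable_of_bdd (C := (C + C) ^ 2) ?_ ?_
          · exact (measurable_param_integral
              (F := fun p : α × α => (u (p.2, p.1) - a p.2) ^ 2) sqm).aestronglyMeasurable
          · exact fun s => abs_integral_le (fun t => sqb (s, t))
        calc ∫ s, (H s - M) ^ 2 ∂μj
            ≤ ∫ s, (∫ t, (u (t, s) - a t) ^ 2 ∂ρ) ∂μj := integral_mono hI1 hI2 step2
          _ = ∫ t, (∫ s, (u (t, s) - a t) ^ 2 ∂μj) ∂ρ := by
              exact integral_integral_swap (f := fun s t => (u (t, s) - a t) ^ 2)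
                (integrable_of_bdd sqm.aestronglyMeasurable sqb)
          _ = ∫ t, ((∫ s, g (Fin.cons t (Function.update y j s)) ^ 2 ∂μj)
              - (∫ s, g (Fin.cons t (Function.update y j s)) ∂μj) ^ 2) ∂ρ := by
              congr 1
              funext t
              have hfm : AEStronglyMeasurable (fun s => u (t, s)) μj :=
                (hum.comp (measurable_const.prodMk measurable_id)).aestronglyMeasurable
              have := var_identity (μ := μj) (f := fun s => u (t, s)) hfm
                (C := C) (fun s => hub _) (a t)
              rw [this, ha]
              simp [hu]
        -- end pointwise
      -- integrate the pointwise inequality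
      have hIL : Integrable (fun y => ((∫ s, h (Function.update y j s) ^ 2 ∂μj)
          - (∫ s, h (Function.update y j s) ∂μj) ^ 2)) π' := by
        refine integrable_of_bdd (C := C ^ 2 + C ^ 2) ?_ ?_
        · have m1 : Measurable (fun p : (Fin n → α) × α => h (Function.update p.1 j p.2)) :=
            hh.comp (measurable_updatep j)
          have m2 := measurable_param_integral (μ := μj) (F := fun p : (Fin n → α) × α =>
            h (Function.update p.1 j p.2) ^ 2) (by simpa [sq, Pi.mul_def] using m1.mul m1)
          have m3 := measurable_param_integral (μ := μj) (F := fun p : (Fin n → α) × α =>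
            h (Function.update p.1 j p.2)) m1
          exact (m2.sub ((by simpa [sq, Pi.mul_def] using m3.mul m3 : Measurable _))).aestronglyMeasurable
        · intro y
          refine (abs_sub _ _).trans (add_le_add ?_ ?_)
          · exact abs_integral_le (fun s => abs_sq_le (hhb _))
          · exact abs_sq_le (abs_integral_le (fun s => hhb _))
      have hIR : Integrable (fun y => ∫ t, ((∫ s, g (Fin.cons t (Function.update y j s)) ^ 2 ∂μj)
          - (∫ s, g (Fin.cons t (Function.update y j s)) ∂μj) ^ 2) ∂ρ) π' := by
        refine integrable_of_bdd (C := C ^ 2 + C ^ 2) ?_ ?_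
        · have mker : Measurable (fun p : (Fin n → α) × α =>
              ((∫ s, g (Fin.cons p.2 (Function.update p.1 j s)) ^ 2 ∂μj)
                - (∫ s, g (Fin.cons p.2 (Function.update p.1 j s)) ∂μj) ^ 2)) := by
            have mg : Measurable (fun q : ((Fin n → α) × α) × α =>
                g (Fin.cons q.1.2 (Function.update q.1.1 j q.2))) := by
              have mpair : Measurable (fun q : ((Fin n → α) × α) × α =>
                  ((Function.update q.1.1 j q.2, q.1.2) : (Fin n → α) × α)) :=
                ((measurable_updatep j).comp
                  ((measurable_fst.comp measurable_fst).prodMk measurable_snd)).prodMk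
                  (measurable_snd.comp measurable_fst)
              exact hg.comp (measurable_consp.comp mpair)
            have m2 := measurable_param_integral (μ := μj)
              (F := fun q : ((Fin n → α) × α) × α =>
                g (Fin.cons q.1.2 (Function.update q.1.1 j q.2)) ^ 2)
              (by simpa [sq, Pi.mul_def] using mg.mul mg)
            have m3 := measurable_param_integral (μ := μj)
              (F := fun q : ((Fin n → α) × α) × α =>
                g (Fin.cons q.1.2 (Function.update q.1.1 j q.2))) mg
            exact m2.sub ((by simpa [sq, Pi.mul_def] using m3.mul m3 : Measurable _))
          exact (measurable_param_integral (μ := ρ) (F := fun p : (Fin n → α) × α =>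
              ((∫ s, g (Fin.cons p.2 (Function.update p.1 j s)) ^ 2 ∂μj)
                - (∫ s, g (Fin.cons p.2 (Function.update p.1 j s)) ∂μj) ^ 2)) mker
            ).aestronglyMeasurable
        · intro y
          apply abs_integral_le
          intro t
          refine (abs_sub _ _).trans (add_le_add ?_ ?_)
          · exact abs_integral_le (fun s => abs_sq_le (hb _))
          · exact abs_sq_le (abs_integral_le (fun s => hb _))
      exact integral_mono hIL hIR pointwise
    -- assemble
    rw [D, Fin.sum_univ_succ, T0]
    refine add_le_add le_rfl ?_
    calc (∫ y, h y ^ 2 ∂π') - (∫ y, h y ∂π') ^ 2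
        ≤ ∑ j : Fin n, ∫ y, ((∫ s, h (Function.update y j s) ^ 2 ∂ν' j)
            - (∫ s, h (Function.update y j s) ∂ν' j) ^ 2) ∂π' := IH ν' h hh C hhb
      _ ≤ ∑ j : Fin n, ∫ x, ((∫ t, g (Function.update x j.succ t) ^ 2 ∂ν j.succ)
            - (∫ t, g (Function.update x j.succ t) ∂ν j.succ) ^ 2) ∂Measure.pi ν :=
          Finset.sum_le_sum (fun j _ => per_j j)



end SelfBoundAux

lemma selfbound_bounded {α : Type*} {d : ℕ} (g : (Fin d → α) → ℝ)
    (g' : Fin d → (Fin d → α) → ℝ)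
    (hdep : ∀ i x y, (∀ j, j ≠ i → x j = y j) → g' i x = g' i y)
    (hsb1 : ∀ i x, 0 ≤ g x - g' i x ∧ g x - g' i x ≤ 1)
    (z : Fin d → α) : ∀ x, g x ≤ g z + d := by
  have claim : ∀ (s : Finset (Fin d)) (x : Fin d → α),
      g x ≤ g (fun j => if j ∈ s then z j else x j) + s.card := by
    intro s
    induction s using Finset.induction_on with
    | empty => intro x; simp
    | @insert i s hi IH =>
      intro x
      set x' : Fin d → α := fun j => if j ∈ s then z j else x j with hx'
      have key : g x' ≤ g (Function.update x' i (z i)) + 1 := by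
        have h1 := (hsb1 i x').2
        have h2 : g' i x' = g' i (Function.update x' i (z i)) :=
          hdep i x' _ (fun j hj => (Function.update_of_ne hj _ _).symm)
        have h3 := (hsb1 i (Function.update x' i (z i))).1
        linarith
      have hupd : Function.update x' i (z i)
          = fun j => if j ∈ insert i s then z j else x j := by
        funext j
        by_cases hj : j = i
        · subst hj; simp
        · simp [Function.update_of_ne hj, hx', Finset.mem_insert, hj]
      have := IH x
      rw [Finset.card_insert_of_notMem hi]
      push_cast
      rw [← hupd]
      linarith
  intro x
  have := claim Finset.univ x
  simpa using this

open SelfBoundAux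

/-- If `g : X^d → ℝ` is a measurable self-bounding function and `X_1, …, X_d` are
independent random variables with values in `X`, then `Z = g(X_1, …, X_d)` satisfies
`Var(Z) ≤ E[Z]`. -/
theorem stmt11 {α Ω : Type*} [MeasurableSpace α] [MeasurableSpace Ω]
    (μ : Measure Ω) [IsProbabilityMeasure μ]
    (d : ℕ) (g : (Fin d → α) → ℝ) (hgmeas : Measurable g)
    (hnonneg : ∀ x, 0 ≤ g x)
    (g' : Fin d → (Fin d → α) → ℝ)
    (hdep : ∀ i x y, (∀ j, j ≠ i → x j = y j) → g' i x = g' i y)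
    (hsb1 : ∀ i x, 0 ≤ g x - g' i x ∧ g x - g' i x ≤ 1)
    (hsb2 : ∀ x, (∑ i, (g x - g' i x)) ≤ g x)
    (X : Fin d → Ω → α) (hXmeas : ∀ i, Measurable (X i))
    (hindep : ProbabilityTheory.iIndepFun X μ) :
    ProbabilityTheory.evariance (fun ω => g (fun i => X i ω)) μ ≤
      ∫⁻ ω, ENNReal.ofReal (g (fun i => X i ω)) ∂μ := by
  classical
  -- basic setup
  have hΩ : Nonempty Ω := by
    by_contra hne
    rw [not_nonempty_iff] at hne
    have h1 := measure_univ (μ := μ)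
    rw [Set.univ_eq_empty_iff.mpr hne] at h1
    simp at h1
  set z : Fin d → α := fun i => X i (Classical.arbitrary Ω) with hz
  set C : ℝ := g z + d with hC
  have hble : ∀ x, g x ≤ C := selfbound_bounded g g' hdep hsb1 z
  have hb : ∀ x, |g x| ≤ C := fun x => by
    rw [abs_of_nonneg (hnonneg x)]; exact hble x
  set Z : Ω → ℝ := fun ω => g (fun i => X i ω) with hZ
  set traj : Ω → (Fin d → α) := fun ω => fun i => X i ω with htraj_def
  have htraj : Measurable traj := measurable_pi_lambda _ (fun i => hXmeas i)
  have hZmeas : Measurable Z := hgmeas.comp htraj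
  have hZb : ∀ ω, |Z ω| ≤ C := fun ω => hb _
  have hZint : Integrable Z μ :=
    integrable_of_bdd hZmeas.aestronglyMeasurable hZb
  have hmem : MemLp Z 2 μ :=
    MemLp.of_bound hZmeas.aestronglyMeasurable C
      (Filter.Eventually.of_forall fun ω => by
        simpa [Real.norm_eq_abs] using hZb ω)
  -- the product measure
  set ν : Fin d → Measure α := fun i => μ.map (X i) with hν
  haveI : ∀ i, IsProbabilityMeasure (ν i) := fun i =>
    Measure.isProbabilityMeasure_map (hXmeas i).aemeasurable
  have hpi : μ.map traj = Measure.pi ν := by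
    refine (Measure.pi_eq fun s hs => ?_).symm
    rw [Measure.map_apply htraj (MeasurableSet.univ_pi hs)]
    have hpre : traj ⁻¹' (Set.univ.pi s) = ⋂ i ∈ Finset.univ, X i ⁻¹' s i := by
      ext ω
      simp [htraj_def, Set.mem_pi]
    rw [hpre, hindep.measure_inter_preimage_eq_mul Finset.univ (fun i _ => hs i)]
    exact Finset.prod_congr rfl fun i _ => (Measure.map_apply (hXmeas i) (hs i)).symm
  -- transfer integrals
  have hgsq : Measurable fun x => g x ^ 2 := by simpa [sq, Pi.mul_def] using hgmeas.mul hgmeas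
  have hmean : ∫ ω, Z ω ∂μ = ∫ x, g x ∂Measure.pi ν := by
    rw [← hpi, integral_map htraj.aemeasurable hgmeas.aestronglyMeasurable]
  have hsqmean : ∫ ω, Z ω ^ 2 ∂μ = ∫ x, g x ^ 2 ∂Measure.pi ν := by
    rw [← hpi, integral_map htraj.aemeasurable hgsq.aestronglyMeasurable]
  -- the key inequality over the product measure
  have key : ∫ x, g x ^ 2 ∂Measure.pi ν - (∫ x, g x ∂Measure.pi ν) ^ 2
      ≤ ∫ x, g x ∂Measure.pi ν := by
    -- notation for the conditional quantities
    set A : Fin d → (Fin d → α) → ℝ :=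
      fun i x => ∫ t, g (Function.update x i t) ∂ν i with hA
    set W : Fin d → (Fin d → α) → ℝ :=
      fun i x => (∫ t, g (Function.update x i t) ^ 2 ∂ν i)
        - (∫ t, g (Function.update x i t) ∂ν i) ^ 2 with hW
    have hAm : ∀ i, Measurable (A i) := fun i =>
      measurable_param_integral (F := fun p : (Fin d → α) × α =>
        g (Function.update p.1 i p.2)) (hgmeas.comp (measurable_updatep i))
    have hAb : ∀ i x, |A i x| ≤ C := fun i x => abs_integral_le (fun t => hb _)
    have hWm : ∀ i, Measurable (W i) := by
      intro i
      have m1 : Measurable (fun p : (Fin d → α) × α => g (Function.update p.1 i p.2)) :=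
        hgmeas.comp (measurable_updatep i)
      have m2 := measurable_param_integral (μ := ν i) (F := fun p : (Fin d → α) × α =>
        g (Function.update p.1 i p.2) ^ 2) (by simpa [sq, Pi.mul_def] using m1.mul m1)
      exact m2.sub ((by simpa [sq, Pi.mul_def] using (hAm i).mul (hAm i) : Measurable _))
    have hWb : ∀ i x, |W i x| ≤ C ^ 2 + C ^ 2 := by
      intro i x
      refine (abs_sub _ _).trans (add_le_add ?_ ?_)
      · exact abs_integral_le (fun t => abs_sq_le (hb _))
      · exact abs_sq_le (abs_integral_le (fun t => hb _))
    have hWint : ∀ i, Integrable (W i) (Measure.pi ν) := fun i =>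
      integrable_of_bdd (hWm i).aestronglyMeasurable (hWb i)
    have hAint : ∀ i, Integrable (A i) (Measure.pi ν) := fun i =>
      integrable_of_bdd (hAm i).aestronglyMeasurable (hAb i)
    -- pointwise self-bounding estimate
    have pointwise : ∀ x, ∑ i, W i x ≤ (∑ i, A i x) - (d : ℝ) * g x + g x := by
      intro x
      have per : ∀ i : Fin d, W i x ≤ A i x - g' i x := by
        intro i
        have hupdm : Measurable (fun t : α => g (Function.update x i t)) :=
          hgmeas.comp ((measurable_updatep i).comp
            (measurable_const.prodMk measurable_id))
        have hrange : ∀ t, 0 ≤ g (Function.update x i t) - g' i x ∧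
            g (Function.update x i t) - g' i x ≤ 1 := by
          intro t
          have h2 : g' i x = g' i (Function.update x i t) :=
            hdep i x _ (fun j hj => (Function.update_of_ne hj _ _).symm)
          rw [h2]
          exact hsb1 i _
        have step1 : W i x ≤ ∫ t, (g (Function.update x i t) - g' i x) ^ 2 ∂ν i :=
          var_le_sub hupdm.aestronglyMeasurable (fun t => hb _) (g' i x)
        have step2 : ∫ t, (g (Function.update x i t) - g' i x) ^ 2 ∂ν i
            ≤ ∫ t, (g (Function.update x i t) - g' i x) ∂ν i := by
          apply integral_mono
          · refine integrable_of_bdd (C := 1) ?_ ?_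
            · exact (by simpa [sq, Pi.mul_def] using
                ((hupdm.sub measurable_const).mul (hupdm.sub measurable_const))
                  : Measurable fun t => (g (Function.update x i t) - g' i x) ^ 2
                ).aestronglyMeasurable
            · intro t
              have := hrange t
              rw [abs_of_nonneg (sq_nonneg _)]
              nlinarith [this.1, this.2]
          · refine integrable_of_bdd (C := 1) ?_ ?_
            · exact (hupdm.sub measurable_const).aestronglyMeasurable
            · intro t
              have := hrange t
              rw [abs_of_nonneg this.1]
              exact this.2
          · intro t
            have h01 := hrange t
            have hsq : (g (Function.update x i t) - g' i x) ^ 2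
                ≤ g (Function.update x i t) - g' i x := by nlinarith [h01.1, h01.2]
            simpa using hsq
        have step3 : ∫ t, (g (Function.update x i t) - g' i x) ∂ν i
            = A i x - g' i x := by
          rw [integral_sub (integrable_of_bdd hupdm.aestronglyMeasurable
            (fun t => hb _)) (integrable_const _), integral_const]
          simp [measure_univ, hA]
        calc W i x ≤ ∫ t, (g (Function.update x i t) - g' i x) ^ 2 ∂ν i := step1
          _ ≤ ∫ t, (g (Function.update x i t) - g' i x) ∂ν i := step2
          _ = A i x - g' i x := step3
      calc ∑ i, W i x ≤ ∑ i, (A i x - g' i x) := Finset.sum_le_sum fun i _ => per i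
        _ = (∑ i, (A i x - g x)) + ∑ i, (g x - g' i x) := by
            rw [← Finset.sum_add_distrib]
            exact Finset.sum_congr rfl fun i _ => by ring
        _ ≤ (∑ i, (A i x - g x)) + g x := by linarith [hsb2 x]
        _ = (∑ i, A i x) - (d : ℝ) * g x + g x := by
            rw [Finset.sum_sub_distrib]
            simp [Finset.card_univ, mul_comm]
    -- integrate everything
    have hgint : Integrable g (Measure.pi ν) :=
      integrable_of_bdd hgmeas.aestronglyMeasurable hb
    have hSum : Integrable (fun x => ∑ i, A i x) (Measure.pi ν) :=
      integrable_finset_sum _ fun i _ => hAint i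
    have hdg : Integrable (fun x => (d : ℝ) * g x) (Measure.pi ν) :=
      hgint.const_mul _
    have hB1 : Integrable (fun x => (∑ i, A i x) - (d : ℝ) * g x) (Measure.pi ν) :=
      hSum.sub hdg
    have hBint : Integrable (fun x => (∑ i, A i x) - (d : ℝ) * g x + g x)
        (Measure.pi ν) := hB1.add hgint
    calc ∫ x, g x ^ 2 ∂Measure.pi ν - (∫ x, g x ∂Measure.pi ν) ^ 2
        ≤ ∑ i, ∫ x, W i x ∂Measure.pi ν :=
          efron_stein d ν g hgmeas C hb
      _ = ∫ x, (∑ i, W i x) ∂Measure.pi ν :=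
          (integral_finset_sum _ fun i _ => hWint i).symm
      _ ≤ ∫ x, ((∑ i, A i x) - (d : ℝ) * g x + g x) ∂Measure.pi ν :=
          integral_mono (integrable_finset_sum _ fun i _ => hWint i) hBint pointwise
      _ = (∑ i, ∫ x, A i x ∂Measure.pi ν) - (d : ℝ) * ∫ x, g x ∂Measure.pi ν
            + ∫ x, g x ∂Measure.pi ν := by
          rw [integral_add hB1 hgint, integral_sub hSum hdg,
            integral_finset_sum _ (fun i _ => hAint i), integral_const_mul]
      _ = ∫ x, g x ∂Measure.pi ν := by
          have : ∀ i : Fin d, ∫ x, A i x ∂Measure.pi ν = ∫ x, g x ∂Measure.pi ν :=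
            fun i => integral_update ν g hgmeas hb i
          rw [Finset.sum_congr rfl fun i _ => this i, Finset.sum_const,
            Finset.card_univ, Fintype.card_fin, nsmul_eq_mul]
          ring
  -- conclude, moving from evariance to variance
  have hvar : ProbabilityTheory.variance Z μ ≤ ∫ ω, Z ω ∂μ := by
    rw [ProbabilityTheory.variance_eq_sub hmem]
    simp only [Pi.pow_apply]
    rw [hsqmean, hmean]
    exact key
  calc ProbabilityTheory.evariance Z μ
      = ENNReal.ofReal (ProbabilityTheory.variance Z μ) :=
        (ENNReal.ofReal_toReal hmem.evariance_lt_top.ne).symm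
    _ ≤ ENNReal.ofReal (∫ ω, Z ω ∂μ) := ENNReal.ofReal_le_ofReal hvar
    _ = ∫⁻ ω, ENNReal.ofReal (Z ω) ∂μ :=
        ofReal_integral_eq_lintegral_ofReal hZint
          (Filter.Eventually.of_forall fun ω => hnonneg _)
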